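/- Fix 1 ≤ k ≤ n and a sign γ, set σ = u_{k−1}⊗∂^γu_1⊗u_{n−k}, and let A_q ∈ νI^n (0 ≤ q ≤ n−1) be the inductively defined composite elements built from the A_q^β. Then A_{n−1} = d_{n−1}^{(−1)^{k−1}γ}⟨u_n⟩. -/

import Mathlib

namespace CubicalNerve

/-- Signs: `true` is `+`, `false` is `−`, as an integer `±1`. -/
def sgn (α : Bool) : ℤ := if α then 1 else -1

/-- Sign twisting: `twist α m` is the sign `(−1)^m α`. -/
def twist (α : Bool) (m : ℕ) : Bool := if Even m then α else !α

/-- A standard basis element of the chain complex `Iⁿ`: the factor at position `i` is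
`u₁` when the value is `none`, and `∂^α u₁` when the value is `some α`. -/
abbrev Cell (n : ℕ) := Fin n → Option Bool

/-- The dimension of a standard basis element: the number of `u₁` factors. -/
def Cell.dim {n : ℕ} (σ : Cell n) : ℕ := (Finset.univ.filter fun i => σ i = none).card

/-- The number of `u₁` factors strictly before position `i`. -/
def Cell.below {n : ℕ} (σ : Cell n) (i : Fin n) : ℕ :=
  (Finset.univ.filter fun j => j < i ∧ σ j = none).card

/-- The number of `∂^± u₁` factors at positions `≤ j`. -/
def Cell.sLe {n : ℕ} (σ : Cell n) (j : Fin n) : ℕ :=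
  (Finset.univ.filter fun i => i ≤ j ∧ σ i ≠ none).card

/-- The chain groups of `Iⁿ` (all degrees taken together): the free abelian group
on the standard basis elements. -/
abbrev Chain (n : ℕ) := Cell n →₀ ℤ

/-- The boundary of a standard basis element (tensor-product boundary formula). -/
noncomputable def bdCell {n : ℕ} (σ : Cell n) : Chain n :=
  ∑ i ∈ Finset.univ.filter (fun i => σ i = none),
    ((-1 : ℤ) ^ σ.below i) •
      (Finsupp.single (Function.update σ i (some true)) 1 -
        Finsupp.single (Function.update σ i (some false)) 1)

/-- The boundary operator of `Iⁿ`. -/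
noncomputable def bd {n : ℕ} (c : Chain n) : Chain n := c.sum fun σ z => z • bdCell σ

/-- The positive part of a chain. -/
noncomputable def posPart {n : ℕ} (c : Chain n) : Chain n :=
  Finsupp.mapRange (fun z => max z 0) (by simp) c

/-- The negative part of a chain. -/
noncomputable def negPart {n : ℕ} (c : Chain n) : Chain n :=
  Finsupp.mapRange (fun z => max (-z) 0) (by simp) c

/-- `∂^α`: the positive (resp. negative) part of the boundary. -/
noncomputable def bdp {n : ℕ} (α : Bool) (c : Chain n) : Chain n :=
  if α then posPart (bd c) else negPart (bd c)

/-- The atom `⟨σ⟩`: `atom σ α q` is the chain `⟨σ⟩_q^α = (∂^α)^{p−q} σ` for `q ≤ p = dim σ`,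
and `0` for `q > p`. -/
noncomputable def atom {n : ℕ} (σ : Cell n) (α : Bool) (q : ℕ) : Chain n :=
  if q ≤ σ.dim then (bdp α)^[σ.dim - q] (Finsupp.single σ 1) else 0

/-- The augmentation (extended by zero on positive-degree chains). -/
noncomputable def aug {n : ℕ} (c : Chain n) : ℤ := c.sum fun σ z => if σ.dim = 0 then z else 0

/-- The top basis element `u_n = u₁ ⊗ ⋯ ⊗ u₁` of `Iⁿ`. -/
def un (n : ℕ) : Cell n := fun _ => none

/-- The basis element `u_{k-1} ⊗ ∂^γ u₁ ⊗ u_{n-k}` (here `k : Fin n` is `k−1` in the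
1-indexed notation of the paper). -/
def kcell {n : ℕ} (k : Fin n) (γ : Bool) : Cell n := Function.update (un n) k (some γ)

/-- Membership in `ν Iⁿ` for a double sequence `x`, where `x i α` is `x_i^α`:
each `x_i^α` is an `i`-chain which is a nonnegative sum of standard basis elements,
`ε x_0^- = ε x_0^+ = 1`, and `x_i^+ − x_i^− = ∂ x_{i+1}^- = ∂ x_{i+1}^+`. -/
def IsNu {n : ℕ} (x : ℕ → Bool → Chain n) : Prop :=
  (∀ i α, ∀ σ ∈ (x i α).support, Cell.dim σ = i) ∧
  (∀ i α, 0 ≤ x i α) ∧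
  (∀ α, aug (x 0 α) = 1) ∧
  (∀ i α, x i true - x i false = bd (x (i + 1) α))

/-- The double sequence of an atom. -/
noncomputable def atomSeq {n : ℕ} (σ : Cell n) : ℕ → Bool → Chain n := fun i α => atom σ α i

/-- The identity operation `d_p^α` on double sequences. -/
noncomputable def dOp {n : ℕ} (p : ℕ) (α : Bool) (x : ℕ → Bool → Chain n) : ℕ → Bool → Chain n :=
  fun i β => if i < p then x i β else if i = p then x p α else 0

/-- The composition `x #_p y = x − d_p⁺ x + y`, formed termwise. -/
noncomputable def comp {n : ℕ} (p : ℕ) (x y : ℕ → Bool → Chain n) : ℕ → Bool → Chain n :=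
  fun i β => x i β - dOp p true x i β + y i β

/-- Insertion of a new tensor factor at (0-indexed) position `i` (clamped into range). -/
def insertCell {m : ℕ} (i : ℕ) (v : Option Bool) (σ : Cell m) : Cell (m + 1) :=
  Fin.insertNth ⟨min i m, Nat.lt_succ_of_le (min_le_right i m)⟩ v σ

/-- The face chain map `∂̌_i^α : Iᵐ → Iᵐ⁺¹` (with `i` 1-indexed, `1 ≤ i ≤ m+1`),
given on standard basis elements by `x ⊗ y ↦ x ⊗ ∂^α u₁ ⊗ y`. -/
noncomputable def faceL (m : ℕ) (i : ℕ) (α : Bool) : Chain m →ₗ[ℤ] Chain (m + 1) :=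
  Finsupp.lmapDomain ℤ ℤ (insertCell (i - 1) (some α))

/-- `IsFaceComposite F` means that `F` is a composite of face chain maps `∂̌_i^α`. -/
inductive IsFaceComposite : ∀ {m n : ℕ}, (Chain m →ₗ[ℤ] Chain n) → Prop
  | id (m : ℕ) : IsFaceComposite (LinearMap.id : Chain m →ₗ[ℤ] Chain m)
  | step {m d : ℕ} {F : Chain m →ₗ[ℤ] Chain d} (i : ℕ) (α : Bool)
      (h1 : 1 ≤ i) (h2 : i ≤ d + 1) :
      IsFaceComposite F → IsFaceComposite ((faceL d i α).comp F)

/-- `stdC m p ι a` is the composite `∂̌_{ι 0}^{a 0} ∘ ⋯ ∘ ∂̌_{ι (p-1)}^{a (p-1)} : Iᵐ → Iᵐ⁺ᵖ`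
(so `∂̌_{ι (p-1)}^{a (p-1)}` is applied first). -/
noncomputable def stdC (m : ℕ) :
    (p : ℕ) → (Fin p → ℕ) → (Fin p → Bool) → (Chain m →ₗ[ℤ] Chain (m + p))
  | 0, _, _ => LinearMap.id
  | p + 1, ι, a =>
      (faceL (m + p) (ι 0) (a 0)).comp (stdC m p (fun r => ι r.succ) (fun r => a r.succ))

/-- Transport of chains along an equality of dimensions. -/
noncomputable def chainCongr {a b : ℕ} (h : a = b) : Chain a ≃ₗ[ℤ] Chain b :=
  Finsupp.domLCongr (Equiv.arrowCongr (finCongr h) (Equiv.refl (Option Bool)))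

/-- The basis element of `I¹` with value `v`. -/
def cellOf (v : Option Bool) : Cell 1 := fun _ => v

/-- The `n`-fold tensor product of chains of `I¹`, as a chain of `Iⁿ`. -/
noncomputable def tens {n : ℕ} (c : Fin n → Chain 1) : Chain n :=
  Finsupp.equivFunOnFinite.symm fun σ => ∏ j, (c j) (cellOf (σ j))

/-- `τ` has an "extreme" standard decomposition of constant sign `ε`: for its `r`-th
factor `∂_{i}^{α}` (`r`, `i` 1-indexed), `(−1)^{i−r} α = ε`. -/
def ExtremeSign {n : ℕ} (τ : Cell n) (ε : ℤ) : Prop :=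
  ∀ (j : Fin n) (α : Bool), τ j = some α →
    (-1 : ℤ) ^ ((j : ℕ) + 1 + τ.sLe j) * sgn α = ε

/-- The basis element `τ` corresponds to a precubical operation complementary to
`∂_{k+1}^γ` (with `k : Fin n`, i.e. `k+1` in the paper's 1-indexing): its standard
decomposition has no factor at position `k`, and inserting `∂_{k+1}^{−γ}` produces
a standard decomposition of constant sign. -/
def CellCompl {n : ℕ} (k : Fin n) (γ : Bool) (τ : Cell n) : Prop :=
  τ k = none ∧ ∃ ε : ℤ, ExtremeSign (Function.update τ k (some (!γ))) ε

/-- The chain homotopy `D` associated to the face `∂_{k+1}^γ` (0-indexed `k : Fin n`). -/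
noncomputable def Dfun {n : ℕ} (k : Fin n) (γ : Bool) (c : Chain n) : Chain n :=
  c.sum fun τ z =>
    if τ k = some (!γ) then
      (z * (-((-1 : ℤ) ^ Cell.below τ k * sgn γ))) •
        Finsupp.single (Function.update τ k (none : Option Bool)) 1
    else 0

/-- The double sequence `A_q^β` of Proposition 6.4. -/
noncomputable def Aseq {n : ℕ} (k : Fin n) (γ : Bool) (q : ℕ) (β : Bool) :
    ℕ → Bool → Chain n :=
  fun i α =>
    if i + 1 < q then atom (un n) α i
    else if i + 1 = q then
      (if α = β then atom (un n) β i
       else atom (un n) β i - bd (Dfun k γ (atom (un n) β i)))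
    else if i = q then sgn β • Dfun k γ (atom (un n) β (q - 1))
    else 0

/-- The elements `A_q` of Proposition 6.5, defined inductively from the `A_q^β` by
`A_0 = ⟨σ⟩` and `A_q = A_q^− #_{q−1} A_{q−1} #_{q−1} A_q^+`. -/
noncomputable def Aq {n : ℕ} (k : Fin n) (γ : Bool) : ℕ → (ℕ → Bool → Chain n)
  | 0 => atomSeq (kcell k γ)
  | q + 1 => comp q (comp q (Aseq k γ (q + 1) false) (Aq k γ q)) (Aseq k γ (q + 1) true)


/-! ### Auxiliary infrastructure -/

open Finset

variable {n : ℕ}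

/-- Generic linear extension of a map on basis cells. -/
noncomputable def lin (g : Cell n → Chain n) : Chain n →ₗ[ℤ] Chain n :=
  Finsupp.lsum ℤ fun τ => LinearMap.toSpanSingleton ℤ (Chain n) (g τ)

lemma lin_apply (g : Cell n → Chain n) (c : Chain n) :
    lin g c = c.sum fun τ z => z • g τ := rfl

lemma lin_single (g : Cell n → Chain n) (τ : Cell n) (z : ℤ) :
    lin g (Finsupp.single τ z) = z • g τ := by
  rw [lin_apply, Finsupp.sum_single_index (zero_smul ℤ (g τ))]

lemma bd_eq (c : Chain n) : bd c = lin bdCell c := rfl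

/-- The atomic piece of `Dfun`. -/
noncomputable def Dcell (k : Fin n) (γ : Bool) (τ : Cell n) : Chain n :=
  if τ k = some (!γ) then
    (-((-1 : ℤ) ^ Cell.below τ k * sgn γ)) •
      Finsupp.single (Function.update τ k (none : Option Bool)) 1
  else 0

lemma Dfun_eq (k : Fin n) (γ : Bool) (c : Chain n) : Dfun k γ c = lin (Dcell k γ) c := by
  rw [lin_apply, Dfun]
  apply Finsupp.sum_congr
  intro τ _
  unfold Dcell
  split_ifs <;> simp [mul_smul]

/-- The atomic piece of `phi`. -/
noncomputable def phiCell (k : Fin n) (γ : Bool) (τ : Cell n) : Chain n :=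
  if τ k = none then 0 else Finsupp.single (Function.update τ k (some γ)) 1

/-- The chain map induced by the projection `ε̌∂̌` in direction `k` with sign `γ`. -/
noncomputable def phi (k : Fin n) (γ : Bool) (c : Chain n) : Chain n := lin (phiCell k γ) c

/-- The indicator chain of a finite set of cells. -/
noncomputable def ind (s : Finset (Cell n)) : Chain n := ∑ τ ∈ s, Finsupp.single τ 1

lemma ind_apply (s : Finset (Cell n)) (ρ : Cell n) : ind s ρ = if ρ ∈ s then 1 else 0 := by
  classical
  rw [ind, Finsupp.finset_sum_apply]
  simp [Finsupp.single_apply]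

lemma lin_ind (g : Cell n → Chain n) (s : Finset (Cell n)) :
    lin g (ind s) = ∑ τ ∈ s, g τ := by
  rw [ind, map_sum]
  exact Finset.sum_congr rfl fun τ _ => by rw [lin_single, one_smul]

open Classical in
/-- The set of extreme cells of dimension `q` and sign `α`. -/
noncomputable def ES (n : ℕ) (q : ℕ) (α : Bool) : Finset (Cell n) :=
  Finset.univ.filter fun τ => Cell.dim τ = q ∧ ExtremeSign τ (sgn α)

lemma mem_ES {q : ℕ} {α : Bool} {τ : Cell n} :
    τ ∈ ES n q α ↔ Cell.dim τ = q ∧ ExtremeSign τ (sgn α) := by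
  classical
  simp [ES]

lemma sgn_true : sgn true = 1 := rfl
lemma sgn_false : sgn false = -1 := rfl

/-! ### Combinatorics of cells -/

lemma below_congr {σ τ : Cell n} {i : Fin n} (h : ∀ j, j < i → σ j = τ j) :
    Cell.below σ i = Cell.below τ i := by
  unfold Cell.below
  congr 1
  apply Finset.filter_congr
  intro j _
  constructor <;> rintro ⟨h1, h2⟩ <;> exact ⟨h1, by rw [h j h1] at * <;> assumption⟩

lemma below_update {τ : Cell n} {i : Fin n} (v : Option Bool) (j : Fin n) (h : ¬ j < i) :
    Cell.below (Function.update τ j v) i = Cell.below τ i := by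
  apply below_congr
  intro j' hj'
  exact Function.update_of_ne (by rintro rfl; exact h hj') _ _

lemma sLe_congr {σ τ : Cell n} {j : Fin n} (h : ∀ i, i ≤ j → (σ i = none ↔ τ i = none)) :
    Cell.sLe σ j = Cell.sLe τ j := by
  unfold Cell.sLe
  congr 1
  apply Finset.filter_congr
  intro i _
  constructor <;> rintro ⟨h1, h2⟩
  · exact ⟨h1, fun hc => h2 ((h i h1).2 hc)⟩
  · exact ⟨h1, fun hc => h2 ((h i h1).1 hc)⟩

lemma sLe_update_of_lt {τ : Cell n} {i j : Fin n} (v : Option Bool) (h : j < i) :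
    Cell.sLe (Function.update τ i v) j = Cell.sLe τ j := by
  apply sLe_congr
  intro i' hi'
  rw [Function.update_of_ne (by rintro rfl; exact absurd hi' (not_le.2 h)) _ _]

lemma sLe_update_none_of_ge {τ : Cell n} {i j : Fin n} (h : i ≤ j) (hi : τ i ≠ none) :
    Cell.sLe (Function.update τ i none) j + 1 = Cell.sLe τ j := by
  classical
  unfold Cell.sLe
  have hset : Finset.univ.filter (fun i' => i' ≤ j ∧ ¬ τ i' = none)
      = insert i (Finset.univ.filter fun i' => i' ≤ j ∧ ¬ (Function.update τ i none) i' = none) := by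
    ext i'
    by_cases he : i' = i
    · subst he; simp [h, hi]
    · simp only [Finset.mem_insert, Finset.mem_filter, Finset.mem_univ, true_and, he, false_or,
        Function.update_of_ne he]
  rw [hset, Finset.card_insert_of_notMem (by simp)]

lemma below_add_sLe {τ : Cell n} {i : Fin n} (h : τ i ≠ none) :
    Cell.below τ i + Cell.sLe τ i = (i : ℕ) + 1 := by
  classical
  unfold Cell.below Cell.sLe
  have h1 : Finset.univ.filter (fun i' => i' ≤ i ∧ ¬ τ i' = none)
      = insert i (Finset.univ.filter fun i' => i' < i ∧ ¬ τ i' = none) := by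
    ext i'
    by_cases he : i' = i
    · subst he; simp [h]
    · simp only [Finset.mem_insert, Finset.mem_filter, Finset.mem_univ, true_and, he, false_or]
      rw [le_iff_lt_or_eq]
      simp [he]
  rw [h1, Finset.card_insert_of_notMem (by simp)]
  have h2 : (Finset.univ.filter fun j => j < i ∧ τ j = none) ∪
      (Finset.univ.filter fun i' => i' < i ∧ ¬ τ i' = none) = Finset.univ.filter (· < i) := by
    ext j
    simp only [Finset.mem_union, Finset.mem_filter, Finset.mem_univ, true_and]
    tauto
  have h3 : Disjoint (Finset.univ.filter fun j => j < i ∧ τ j = none)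
      (Finset.univ.filter fun i' => i' < i ∧ ¬ τ i' = none) := by
    rw [Finset.disjoint_filter]
    tauto
  have h4 := Finset.card_union_of_disjoint h3
  rw [h2] at h4
  have h5 : (Finset.univ.filter (· < i)).card = (i : ℕ) := by
    rw [show Finset.univ.filter (· < i) = Finset.Iio i by ext j; simp, Fin.card_Iio]
  omega

lemma dim_un : Cell.dim (un n) = n := by
  simp [un, Cell.dim]

lemma dim_update_some {τ : Cell n} {i : Fin n} (h : τ i = none) (δ : Bool) :
    Cell.dim (Function.update τ i (some δ)) + 1 = Cell.dim τ := by
  classical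
  unfold Cell.dim
  have hset : Finset.univ.filter (fun j => τ j = none)
      = insert i (Finset.univ.filter fun j => Function.update τ i (some δ) j = none) := by
    ext j
    by_cases he : j = i
    · subst he; simp [h]
    · simp only [Finset.mem_insert, Finset.mem_filter, Finset.mem_univ, true_and, he, false_or,
        Function.update_of_ne he]
  rw [hset, Finset.card_insert_of_notMem (by simp)]

lemma dim_update_none {τ : Cell n} {i : Fin n} (h : τ i ≠ none) :
    Cell.dim (Function.update τ i none) = Cell.dim τ + 1 := by
  classical
  unfold Cell.dim
  have hset : Finset.univ.filter (fun j => Function.update τ i none j = none)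
      = insert i (Finset.univ.filter fun j => τ j = none) := by
    ext j
    by_cases he : j = i
    · subst he; simp
    · simp only [Finset.mem_insert, Finset.mem_filter, Finset.mem_univ, true_and, he, false_or,
        Function.update_of_ne he]
  rw [hset, Finset.card_insert_of_notMem (by simp [h])]

lemma eq_un_of_dim {τ : Cell n} (h : Cell.dim τ = n) : τ = un n := by
  classical
  unfold Cell.dim at h
  have : Finset.univ.filter (fun j => τ j = none) = Finset.univ := by
    apply Finset.eq_univ_of_card
    rw [h]
    simp
  funext j
  have := Finset.mem_filter.1 (this ▸ Finset.mem_univ j)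
  exact this.2

lemma exists_some_of_dim_lt {τ : Cell n} (h : Cell.dim τ < n) : ∃ i, τ i ≠ none := by
  by_contra hc
  push_neg at hc
  have : Cell.dim τ = n := by
    unfold Cell.dim
    rw [Finset.filter_true_of_mem (fun i _ => hc i), Finset.card_univ, Fintype.card_fin]
  omega

/-- At most one `some` entry: a cell of dimension `n-1` with a `some` at `k` is `none` elsewhere. -/
lemma eq_none_of_dim_pred {τ : Cell n} {k : Fin n} (h : Cell.dim τ + 1 = n)
    (hk : τ k ≠ none) : ∀ j, j ≠ k → τ j = none := by
  classical
  have hsub : Finset.univ.filter (fun j => τ j = none) ⊆ Finset.univ.erase k := by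
    intro j hj
    simp only [Finset.mem_filter] at hj
    simp only [Finset.mem_erase, Finset.mem_univ, and_true]
    rintro rfl; exact hk hj.2
  have hcard : (Finset.univ.erase k).card = n - 1 := by
    rw [Finset.card_erase_of_mem (Finset.mem_univ k), Finset.card_univ, Fintype.card_fin]
  have heq : Finset.univ.filter (fun j => τ j = none) = Finset.univ.erase k := by
    apply Finset.eq_of_subset_of_card_le hsub
    rw [hcard]
    unfold Cell.dim at h
    omega
  intro j hj
  have : j ∈ Finset.univ.filter (fun j => τ j = none) := by
    rw [heq]; simp [hj]
  exact (Finset.mem_filter.1 this).2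

/-! ### Signs -/

def osgn : Option Bool → ℤ
  | none => 0
  | some δ => sgn δ

/-- The sign of a `some` slot in the extreme-cell bookkeeping. -/
noncomputable def eSgn (ρ : Cell n) (i : Fin n) : ℤ :=
  (-1) ^ ((i : ℕ) + 1 + Cell.sLe ρ i) * osgn (ρ i)

lemma sgn_mul_self (α : Bool) : sgn α * sgn α = 1 := by cases α <;> rfl

lemma neg_one_pow_add_two_mul (a b : ℕ) : ((-1 : ℤ)) ^ (a + 2 * b) = (-1) ^ a := by
  rw [pow_add, pow_mul]
  norm_num

lemma below_eSgn {ρ : Cell n} {i : Fin n} (h : ρ i ≠ none) :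
    (-1 : ℤ) ^ (Cell.below ρ i) * osgn (ρ i) = eSgn ρ i := by
  unfold eSgn
  congr 1
  have hb := below_add_sLe h
  have : (i : ℕ) + 1 + Cell.sLe ρ i = Cell.below ρ i + 2 * Cell.sLe ρ i := by omega
  rw [this, neg_one_pow_add_two_mul]

lemma extremeSign_iff {ρ : Cell n} {ε : ℤ} :
    ExtremeSign ρ ε ↔ ∀ i, ρ i ≠ none → eSgn ρ i = ε := by
  constructor
  · intro h i hi
    rcases hv : ρ i with _ | δ
    · exact absurd hv hi
    · have := h i δ hv
      unfold eSgn
      rw [hv]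
      exact this
  · intro h j δ hj
    have := h j (by rw [hj]; simp)
    unfold eSgn at this
    rw [hj] at this
    exact this

lemma eSgn_cases {ρ : Cell n} {i : Fin n} (h : ρ i ≠ none) : eSgn ρ i = 1 ∨ eSgn ρ i = -1 := by
  unfold eSgn
  rcases hv : ρ i with _ | δ
  · exact absurd hv h
  · rcases Nat.even_or_odd ((i : ℕ) + 1 + Cell.sLe ρ i) with he | ho
    · rw [he.neg_one_pow]
      cases δ <;> simp [osgn, sgn]
    · rw [ho.neg_one_pow]
      cases δ <;> simp [osgn, sgn]

/-- Extremality of the cell obtained by blanking slot `i`. -/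
lemma extremeSign_update_none_iff {ρ : Cell n} {i : Fin n} (hi : ρ i ≠ none) {ε : ℤ} :
    ExtremeSign (Function.update ρ i none) ε ↔
      (∀ j, ρ j ≠ none → j < i → eSgn ρ j = ε) ∧ (∀ j, ρ j ≠ none → i < j → eSgn ρ j = -ε) := by
  rw [extremeSign_iff]
  have key : ∀ j, j ≠ i → ρ j ≠ none →
      eSgn (Function.update ρ i none) j = if j < i then eSgn ρ j else -eSgn ρ j := by
    intro j hj hρj
    unfold eSgn
    rw [Function.update_of_ne hj]
    by_cases hlt : j < i
    · rw [if_pos hlt, sLe_update_of_lt _ hlt]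
    · rw [if_neg hlt]
      have hij : i ≤ j := by
        rcases lt_trichotomy i j with h | h | h
        · exact le_of_lt h
        · exact le_of_eq h
        · exact absurd h hlt
      have hs := sLe_update_none_of_ge hij hi
      have : (j : ℕ) + 1 + Cell.sLe ρ j
          = ((j : ℕ) + 1 + Cell.sLe (Function.update ρ i none) j) + 1 := by omega
      rw [this, pow_succ]
      ring
  constructor
  · intro h
    constructor
    · intro j hj hlt
      have hji : j ≠ i := fun he => absurd (he ▸ hlt) (lt_irrefl i)
      have := h j (by rw [Function.update_of_ne hji]; exact hj)
      rw [key j hji hj, if_pos hlt] at this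
      exact this
    · intro j hj hlt
      have hji : j ≠ i := fun he => absurd (he ▸ hlt) (lt_irrefl i)
      have := h j (by rw [Function.update_of_ne hji]; exact hj)
      rw [key j hji hj, if_neg (not_lt.2 (le_of_lt hlt))] at this
      omega
  · rintro ⟨h1, h2⟩ j hj
    by_cases hji : j = i
    · subst hji; simp at hj
    · rw [Function.update_of_ne hji] at hj
      rw [key j hji hj]
      rcases lt_trichotomy j i with h | h | h
      · rw [if_pos h]; exact h1 j hj h
      · exact absurd h hji
      · rw [if_neg (not_lt.2 (le_of_lt h))]
        rw [h2 j hj h]; ring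

/-! ### The abstract boundary-pattern summation -/

lemma pattern_sum_core {m : ℕ} (S : Finset (Fin m)) (e : Fin m → ℤ) (ε : ℤ)
    (hεne : ε ≠ -ε) (he : ∀ j ∈ S, e j = ε ∨ e j = -ε) :
    (∑ i ∈ S.filter (fun i => (∀ j ∈ S, j < i → e j = ε) ∧ (∀ j ∈ S, i < j → e j = -ε)), e i)
      = (if S.Nonempty ∧ ∀ j ∈ S, e j = ε then ε else 0)
        + (if S.Nonempty ∧ ∀ j ∈ S, e j = -ε then -ε else 0) := by
  classical
  by_cases hS : S.Nonempty
  swap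
  · rw [Finset.not_nonempty_iff_eq_empty] at hS
    subst hS
    simp
  by_cases hA : ∀ j ∈ S, e j = ε
  · have hmax := S.max'_mem hS
    have hfil : S.filter (fun i => (∀ j ∈ S, j < i → e j = ε) ∧ (∀ j ∈ S, i < j → e j = -ε))
        = {S.max' hS} := by
      ext i
      simp only [Finset.mem_filter, Finset.mem_singleton]
      constructor
      · rintro ⟨hiS, _, h2⟩
        by_contra hne
        have hlt : i < S.max' hS := lt_of_le_of_ne (S.le_max' i hiS) hne
        have := h2 _ hmax hlt
        rw [hA _ hmax] at this
        exact hεne this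
      · rintro rfl
        refine ⟨hmax, fun j hj _ => hA j hj, fun j hj hlt => ?_⟩
        exact absurd hlt (not_lt.2 (S.le_max' j hj))
    have hB : ¬ (S.Nonempty ∧ ∀ j ∈ S, e j = -ε) := by
      rintro ⟨_, hB⟩
      have h1 := hA _ hmax
      have h2 := hB _ hmax
      rw [h1] at h2
      exact hεne h2
    rw [hfil, Finset.sum_singleton, hA _ hmax, if_pos ⟨hS, hA⟩, if_neg hB, add_zero]
  · by_cases hB : ∀ j ∈ S, e j = -ε
    · have hmin := S.min'_mem hS
      have hfil : S.filter (fun i => (∀ j ∈ S, j < i → e j = ε) ∧ (∀ j ∈ S, i < j → e j = -ε))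
          = {S.min' hS} := by
        ext i
        simp only [Finset.mem_filter, Finset.mem_singleton]
        constructor
        · rintro ⟨hiS, h1, _⟩
          by_contra hne
          have hlt : S.min' hS < i := lt_of_le_of_ne (S.min'_le i hiS) (Ne.symm hne)
          have := h1 _ hmin hlt
          rw [hB _ hmin] at this
          exact hεne this.symm
        · rintro rfl
          refine ⟨hmin, fun j hj hlt => ?_, fun j hj _ => hB j hj⟩
          exact absurd hlt (not_lt.2 (S.min'_le j hj))
      rw [hfil, Finset.sum_singleton, hB _ hmin, if_neg (fun hc => hA hc.2), if_pos ⟨hS, hB⟩,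
        zero_add]
    · rw [if_neg (fun hc => hA hc.2), if_neg (fun hc => hB hc.2), add_zero]
      have hAe : ∃ j ∈ S, e j = ε := by
        push_neg at hB
        obtain ⟨b, hbS, hbne⟩ := hB
        rcases he b hbS with h | h
        · exact ⟨b, hbS, h⟩
        · exact absurd h hbne
      have hBe : ∃ j ∈ S, e j = -ε := by
        push_neg at hA
        obtain ⟨b, hbS, hbne⟩ := hA
        rcases he b hbS with h | h
        · exact absurd h hbne
        · exact ⟨b, hbS, h⟩
      set Sa := S.filter (fun j => e j = ε) with hSa
      set Sb := S.filter (fun j => e j = -ε) with hSb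
      have hSane : Sa.Nonempty := by
        obtain ⟨j, hj, hje⟩ := hAe; exact ⟨j, Finset.mem_filter.2 ⟨hj, hje⟩⟩
      have hSbne : Sb.Nonempty := by
        obtain ⟨j, hj, hje⟩ := hBe; exact ⟨j, Finset.mem_filter.2 ⟨hj, hje⟩⟩
      set a := Sa.max' hSane with ha
      set b := Sb.min' hSbne with hb
      have haS : a ∈ S := (Finset.mem_filter.1 (Sa.max'_mem hSane)).1
      have hbS : b ∈ S := (Finset.mem_filter.1 (Sb.min'_mem hSbne)).1
      have hae : e a = ε := (Finset.mem_filter.1 (Sa.max'_mem hSane)).2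
      have hbe : e b = -ε := (Finset.mem_filter.1 (Sb.min'_mem hSbne)).2
      have hamax : ∀ j ∈ S, e j = ε → j ≤ a := fun j hj hje =>
        Sa.le_max' j (Finset.mem_filter.2 ⟨hj, hje⟩)
      have hbmin : ∀ j ∈ S, e j = -ε → b ≤ j := fun j hj hje =>
        Sb.min'_le j (Finset.mem_filter.2 ⟨hj, hje⟩)
      have hab : a ≠ b := by
        intro hc
        rw [hc, hbe] at hae
        exact hεne hae.symm
      have valid_iff : ∀ i ∈ S, ((∀ j ∈ S, j < i → e j = ε) ∧ (∀ j ∈ S, i < j → e j = -ε)) →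
          i = a ∨ i = b := by
        rintro i hiS ⟨h1, h2⟩
        rcases he i hiS with hei | hei
        · left
          refine le_antisymm (hamax i hiS hei) (le_of_not_gt fun hlt => ?_)
          have := h2 a haS hlt
          rw [hae] at this
          exact hεne this
        · right
          refine le_antisymm (le_of_not_gt fun hlt => ?_) (hbmin i hiS hei)
          have := h1 b hbS hlt
          rw [hbe] at this
          exact hεne this.symm
      have free_a : ∀ j ∈ S, a < j → e j = -ε := by
        intro j hj hlt
        rcases he j hj with hej | hej
        · exact absurd hlt (not_lt.2 (hamax j hj hej))
        · exact hej
      have free_b : ∀ j ∈ S, j < b → e j = ε := by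
        intro j hj hlt
        rcases he j hj with hej | hej
        · exact hej
        · exact absurd hlt (not_lt.2 (hbmin j hj hej))
      have hPa_iff : (∀ j ∈ S, j < a → e j = ε) ↔ (∀ j ∈ S, b < j → e j = -ε) := by
        constructor
        · intro hPa
          have haltb : a < b := by
            rcases lt_trichotomy a b with h | h | h
            · exact h
            · exact absurd h hab
            · have := hPa b hbS h
              rw [hbe] at this
              exact absurd this.symm hεne
          intro j hj hlt
          rcases he j hj with hej | hej
          · exact absurd (lt_trans haltb hlt) (not_lt.2 (hamax j hj hej))
          · exact hej
        · intro hPb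
          have haltb : a < b := by
            rcases lt_trichotomy a b with h | h | h
            · exact h
            · exact absurd h hab
            · have := hPb a haS h
              rw [hae] at this
              exact absurd this hεne
          intro j hj hlt
          rcases he j hj with hej | hej
          · exact hej
          · exact absurd (lt_trans hlt haltb) (not_lt.2 (hbmin j hj hej))
      by_cases hPa : ∀ j ∈ S, j < a → e j = ε
      · have hfil : S.filter (fun i => (∀ j ∈ S, j < i → e j = ε) ∧ (∀ j ∈ S, i < j → e j = -ε))
            = {a, b} := by
          ext i
          simp only [Finset.mem_filter, Finset.mem_insert, Finset.mem_singleton]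
          constructor
          · rintro ⟨hiS, hv⟩
            exact valid_iff i hiS hv
          · rintro (rfl | rfl)
            · exact ⟨haS, hPa, free_a⟩
            · exact ⟨hbS, free_b, hPa_iff.1 hPa⟩
        rw [hfil, Finset.sum_pair hab, hae, hbe]
        ring
      · have hfil : S.filter (fun i => (∀ j ∈ S, j < i → e j = ε) ∧ (∀ j ∈ S, i < j → e j = -ε))
            = ∅ := by
          ext i
          simp only [Finset.mem_filter, Finset.notMem_empty, iff_false]
          rintro ⟨hiS, hv⟩
          rcases valid_iff i hiS hv with rfl | rfl
          · exact hPa hv.1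
          · exact hPa (hPa_iff.2 hv.2)
        rw [hfil, Finset.sum_empty]

lemma pattern_sum {m : ℕ} (S : Finset (Fin m)) (e : Fin m → ℤ)
    (he : ∀ j ∈ S, e j = 1 ∨ e j = -1) (ε : ℤ) (hε : ε = 1 ∨ ε = -1) :
    (∑ i ∈ S.filter (fun i => (∀ j ∈ S, j < i → e j = ε) ∧ (∀ j ∈ S, i < j → e j = -ε)), e i)
      = (if ∀ j ∈ S, e j = 1 then 1 else 0) - (if ∀ j ∈ S, e j = -1 then 1 else 0) := by
  classical
  have hεne : ε ≠ -ε := by rcases hε with rfl | rfl <;> norm_num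
  have he' : ∀ j ∈ S, e j = ε ∨ e j = -ε := by
    intro j hj
    rcases he j hj with h | h <;> rcases hε with rfl | rfl
    · exact Or.inl h
    · exact Or.inr (by rw [h]; ring)
    · exact Or.inr h
    · exact Or.inl h
  rw [pattern_sum_core S e ε hεne he']
  by_cases hS : S.Nonempty
  swap
  · rw [Finset.not_nonempty_iff_eq_empty] at hS
    subst hS
    simp
  obtain ⟨j0, hj0⟩ := hS
  have hnot : ¬ ((∀ j ∈ S, e j = 1) ∧ (∀ j ∈ S, e j = -1)) := by
    rintro ⟨h1, h2⟩
    have := h1 j0 hj0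
    rw [h2 j0 hj0] at this
    norm_num at this
  rcases hε with rfl | rfl
  · by_cases h1 : ∀ j ∈ S, e j = 1 <;> by_cases h2 : ∀ j ∈ S, e j = -1
    · exact absurd ⟨h1, h2⟩ hnot
    · rw [if_pos ⟨⟨j0, hj0⟩, h1⟩, if_neg (fun hc => h2 hc.2), if_pos h1, if_neg h2]
      norm_num
    · rw [if_neg (fun hc => h1 hc.2), if_pos ⟨⟨j0, hj0⟩, h2⟩, if_neg h1, if_pos h2]
      norm_num
    · rw [if_neg (fun hc => h1 hc.2), if_neg (fun hc => h2 hc.2), if_neg h1, if_neg h2]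
      norm_num
  · have e1 : ∀ j ∈ S, (e j = -(-1 : ℤ)) ↔ e j = 1 := by intro j hj; norm_num
    by_cases h1 : ∀ j ∈ S, e j = 1 <;> by_cases h2 : ∀ j ∈ S, e j = -1
    · exact absurd ⟨h1, h2⟩ hnot
    · rw [if_neg, if_pos ⟨⟨j0, hj0⟩, fun j hj => (e1 j hj).2 (h1 j hj)⟩, if_pos h1, if_neg h2]
      · norm_num
      · rintro ⟨_, hc⟩
        exact h2 hc
    · rw [if_pos ⟨⟨j0, hj0⟩, h2⟩, if_neg, if_neg h1, if_pos h2]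
      · norm_num
      · rintro ⟨_, hc⟩
        exact h1 (fun j hj => (e1 j hj).1 (hc j hj))
    · rw [if_neg (fun hc => h2 hc.2), if_neg, if_neg h1, if_neg h2]
      · norm_num
      · rintro ⟨_, hc⟩
        exact h1 (fun j hj => (e1 j hj).1 (hc j hj))

/-! ### The boundary of indicator chains of extreme cells -/

lemma bdCell_apply (τ ρ : Cell n) :
    bdCell τ ρ = ∑ i : Fin n,
      (if ρ i ≠ none ∧ Function.update ρ i none = τ
        then ((-1 : ℤ) ^ Cell.below ρ i) * osgn (ρ i) else 0) := by
  classical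
  have happ : bdCell τ ρ = ∑ i ∈ Finset.univ.filter (fun i => τ i = none),
      ((-1 : ℤ) ^ Cell.below τ i) *
        ((Finsupp.single (Function.update τ i (some true)) 1 : Chain n) ρ -
         (Finsupp.single (Function.update τ i (some false)) 1 : Chain n) ρ) := by
    rw [bdCell, Finsupp.finset_sum_apply]
    apply Finset.sum_congr rfl
    intro i _
    rw [Finsupp.smul_apply, Finsupp.sub_apply, smul_eq_mul]
  rw [happ, Finset.sum_filter]
  apply Finset.sum_congr rfl
  intro i _
  by_cases hτ : τ i = none
  · rw [if_pos hτ]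
    rcases hρ : ρ i with _ | δ
    · rw [if_neg (fun hc => hc.1 rfl)]
      have h1 : Function.update τ i (some true) ≠ ρ := by
        intro hc
        rw [← hc, Function.update_self] at hρ
        cases hρ
      have h2 : Function.update τ i (some false) ≠ ρ := by
        intro hc
        rw [← hc, Function.update_self] at hρ
        cases hρ
      simp [Finsupp.single_apply, h1, h2]
    · by_cases hup : Function.update ρ i none = τ
      · rw [if_pos ⟨by simp, hup⟩]
        have hbelow : Cell.below ρ i = Cell.below τ i := by
          apply below_congr
          intro j hj
          rw [← hup, Function.update_of_ne (by rintro rfl; exact absurd hj (lt_irrefl _))]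
        have hkey : ∀ δ' : Bool, Function.update τ i (some δ') = ρ ↔ δ' = δ := by
          intro δ'
          rw [← hup, Function.update_idem]
          constructor
          · intro hc
            have := congrFun hc i
            rw [Function.update_self, hρ] at this
            exact Option.some_injective _ this
          · rintro rfl
            funext j
            by_cases hji : j = i
            · subst hji; rw [Function.update_self, hρ]
            · rw [Function.update_of_ne hji]
        rw [Finsupp.single_apply, Finsupp.single_apply, hbelow]
        rcases δ with _ | _
        · rw [if_neg (fun hc => by simpa using (hkey true).1 hc), if_pos ((hkey false).2 rfl)]
          simp [osgn, sgn]
        · rw [if_pos ((hkey true).2 rfl), if_neg (fun hc => by simpa using (hkey false).1 hc)]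
          simp [osgn, sgn]
      · rw [if_neg (fun hc => hup hc.2)]
        have hkey : ∀ δ' : Bool, Function.update τ i (some δ') ≠ ρ := by
          intro δ' hc
          apply hup
          funext j
          by_cases hji : j = i
          · subst hji; rw [Function.update_self, hτ]
          · rw [Function.update_of_ne hji, ← hc, Function.update_of_ne hji]
        simp [Finsupp.single_apply, hkey true, hkey false]
  · rw [if_neg hτ, if_neg]
    rintro ⟨-, hup⟩
    rw [← hup, Function.update_self] at hτ
    exact hτ rfl

lemma bd_ind_apply (s : Finset (Cell n)) (ρ : Cell n) :
    bd (ind s) ρ = ∑ i : Fin n,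
      (if ρ i ≠ none ∧ Function.update ρ i none ∈ s
        then ((-1 : ℤ) ^ Cell.below ρ i) * osgn (ρ i) else 0) := by
  classical
  rw [bd_eq, lin_ind, Finsupp.finset_sum_apply,
    Finset.sum_congr rfl (fun τ _ => bdCell_apply τ ρ), Finset.sum_comm]
  apply Finset.sum_congr rfl
  intro i _
  by_cases hi : ρ i ≠ none
  · simp only [hi, ne_eq, not_false_eq_true, true_and]
    exact Finset.sum_ite_eq s (Function.update ρ i none)
      (fun _ => ((-1 : ℤ) ^ Cell.below ρ i) * osgn (ρ i))
  · rw [if_neg (fun h => hi h.1)]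
    apply Finset.sum_eq_zero
    intro τ _
    rw [if_neg (fun h => hi h.1)]

lemma bd_ES (q : ℕ) (β : Bool) :
    bd (ind (ES n (q + 1) β)) = ind (ES n q true) - ind (ES n q false) := by
  classical
  ext ρ
  rw [Finsupp.sub_apply, bd_ind_apply, ind_apply, ind_apply]
  by_cases hdim : Cell.dim ρ = q
  swap
  · rw [if_neg (fun hc => hdim (mem_ES.1 hc).1), if_neg (fun hc => hdim (mem_ES.1 hc).1),
      sub_zero]
    apply Finset.sum_eq_zero
    intro i _
    rw [if_neg]
    rintro ⟨hi, hmem⟩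
    have h1 := (mem_ES.1 hmem).1
    rw [dim_update_none hi] at h1
    exact hdim (by omega)
  · have hstep : ∀ i : Fin n,
        (if ρ i ≠ none ∧ Function.update ρ i none ∈ ES n (q + 1) β
          then ((-1 : ℤ) ^ Cell.below ρ i) * osgn (ρ i) else 0)
        = (if i ∈ Finset.univ.filter (fun i => ρ i ≠ none) ∧
            ((∀ j ∈ Finset.univ.filter (fun i => ρ i ≠ none), j < i → eSgn ρ j = sgn β) ∧
             (∀ j ∈ Finset.univ.filter (fun i => ρ i ≠ none), i < j → eSgn ρ j = -sgn β))
          then eSgn ρ i else 0) := by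
      intro i
      by_cases hi : ρ i ≠ none
      · by_cases hc : (∀ j, ρ j ≠ none → j < i → eSgn ρ j = sgn β) ∧
            (∀ j, ρ j ≠ none → i < j → eSgn ρ j = -sgn β)
        · rw [if_pos, if_pos, below_eSgn hi]
          · refine ⟨Finset.mem_filter.2 ⟨Finset.mem_univ i, hi⟩, ?_, ?_⟩
            · exact fun j hj hlt => hc.1 j (Finset.mem_filter.1 hj).2 hlt
            · exact fun j hj hlt => hc.2 j (Finset.mem_filter.1 hj).2 hlt
          · refine ⟨hi, mem_ES.2 ⟨?_, ?_⟩⟩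
            · rw [dim_update_none hi, hdim]
            · exact (extremeSign_update_none_iff hi).2 hc
        · rw [if_neg, if_neg]
          · rintro ⟨-, h1, h2⟩
            exact hc ⟨fun j hj hlt => h1 j (Finset.mem_filter.2 ⟨Finset.mem_univ j, hj⟩) hlt,
                      fun j hj hlt => h2 j (Finset.mem_filter.2 ⟨Finset.mem_univ j, hj⟩) hlt⟩
          · rintro ⟨-, hmem2⟩
            exact hc ((extremeSign_update_none_iff hi).1 (mem_ES.1 hmem2).2)
      · rw [if_neg, if_neg]
        · rintro ⟨hmemS, -⟩
          exact hi (Finset.mem_filter.1 hmemS).2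
        · rintro ⟨h1, -⟩
          exact hi h1
    rw [Finset.sum_congr rfl (fun i _ => hstep i)]
    rw [← Finset.sum_filter]
    have hset : Finset.univ.filter (fun i => i ∈ Finset.univ.filter (fun i => ρ i ≠ none) ∧
        ((∀ j ∈ Finset.univ.filter (fun i => ρ i ≠ none), j < i → eSgn ρ j = sgn β) ∧
         (∀ j ∈ Finset.univ.filter (fun i => ρ i ≠ none), i < j → eSgn ρ j = -sgn β)))
        = (Finset.univ.filter (fun i => ρ i ≠ none)).filter
            (fun i => (∀ j ∈ Finset.univ.filter (fun i => ρ i ≠ none), j < i → eSgn ρ j = sgn β) ∧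
             (∀ j ∈ Finset.univ.filter (fun i => ρ i ≠ none), i < j → eSgn ρ j = -sgn β)) := by
      ext i
      simp only [Finset.mem_filter, Finset.mem_univ, true_and]
    rw [hset, pattern_sum (Finset.univ.filter (fun i => ρ i ≠ none)) (eSgn ρ)
      (fun j hj => eSgn_cases (Finset.mem_filter.1 hj).2) (sgn β)
      (by cases β <;> simp [sgn_true, sgn_false])]
    have hP1 : (∀ j ∈ Finset.univ.filter (fun i => ρ i ≠ none), eSgn ρ j = 1)
        ↔ ρ ∈ ES n q true := by
      rw [mem_ES, sgn_true]
      constructor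
      · intro h
        exact ⟨hdim, extremeSign_iff.2 fun i hi =>
          h i (Finset.mem_filter.2 ⟨Finset.mem_univ i, hi⟩)⟩
      · intro h j hj
        exact extremeSign_iff.1 h.2 j (Finset.mem_filter.1 hj).2
    have hP2 : (∀ j ∈ Finset.univ.filter (fun i => ρ i ≠ none), eSgn ρ j = -1)
        ↔ ρ ∈ ES n q false := by
      rw [mem_ES, sgn_false]
      constructor
      · intro h
        exact ⟨hdim, extremeSign_iff.2 fun i hi =>
          h i (Finset.mem_filter.2 ⟨Finset.mem_univ i, hi⟩)⟩
      · intro h j hj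
        exact extremeSign_iff.1 h.2 j (Finset.mem_filter.1 hj).2
    rw [if_congr hP1 rfl rfl, if_congr hP2 rfl rfl]

/-! ### Positive and negative parts, and the closed form of atoms of `u_n` -/

lemma posPart_apply (c : Chain n) (ρ : Cell n) : posPart c ρ = max (c ρ) 0 :=
  Finsupp.mapRange_apply

lemma negPart_apply (c : Chain n) (ρ : Cell n) : negPart c ρ = max (-(c ρ)) 0 :=
  Finsupp.mapRange_apply

lemma posPart_ind_sub {s t : Finset (Cell n)} (h : ∀ ρ ∈ s, ρ ∉ t) :
    posPart (ind s - ind t) = ind s := by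
  ext ρ
  rw [posPart_apply, Finsupp.sub_apply, ind_apply, ind_apply]
  by_cases hs : ρ ∈ s
  · rw [if_pos hs, if_neg (h ρ hs)]
    norm_num
  · rw [if_neg hs]
    by_cases ht : ρ ∈ t
    · rw [if_pos ht]
      norm_num
    · rw [if_neg ht]
      norm_num

lemma negPart_ind_sub {s t : Finset (Cell n)} (h : ∀ ρ ∈ s, ρ ∉ t) :
    negPart (ind s - ind t) = ind t := by
  ext ρ
  rw [negPart_apply, Finsupp.sub_apply, ind_apply, ind_apply]
  by_cases hs : ρ ∈ s
  · rw [if_pos hs, if_neg (h ρ hs)]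
    norm_num
  · rw [if_neg hs]
    by_cases ht : ρ ∈ t
    · rw [if_pos ht]
      norm_num
    · rw [if_neg ht]
      norm_num

lemma ES_disj {q : ℕ} (hq : q < n) : ∀ ρ ∈ ES n q true, ρ ∉ ES n q false := by
  intro ρ h1 h2
  obtain ⟨hdim, hext1⟩ := mem_ES.1 h1
  obtain ⟨-, hext2⟩ := mem_ES.1 h2
  obtain ⟨i, hi⟩ := exists_some_of_dim_lt (hdim ▸ hq)
  have e1 := extremeSign_iff.1 hext1 i hi
  have e2 := extremeSign_iff.1 hext2 i hi
  rw [e1, sgn_true] at e2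
  rw [sgn_false] at e2
  norm_num at e2

lemma ES_top (α : Bool) : ES n n α = {un n} := by
  ext τ
  rw [mem_ES, Finset.mem_singleton]
  constructor
  · rintro ⟨hdim, -⟩
    exact eq_un_of_dim hdim
  · rintro rfl
    refine ⟨dim_un, ?_⟩
    intro j δ hj
    exact absurd hj (by simp [un])

lemma atom_succ {σ : Cell n} {q : ℕ} (h : q < Cell.dim σ) (α : Bool) :
    atom σ α q = bdp α (atom σ α (q + 1)) := by
  unfold atom
  rw [if_pos (le_of_lt h), if_pos (show q + 1 ≤ Cell.dim σ from h)]
  rw [show Cell.dim σ - q = (Cell.dim σ - (q + 1)) + 1 by omega, Function.iterate_succ_apply']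

lemma atom_top (σ : Cell n) (α : Bool) : atom σ α (Cell.dim σ) = Finsupp.single σ 1 := by
  unfold atom
  rw [if_pos (le_refl _), Nat.sub_self, Function.iterate_zero_apply]

lemma atom_of_gt {σ : Cell n} {q : ℕ} (h : Cell.dim σ < q) (α : Bool) : atom σ α q = 0 := by
  unfold atom
  rw [if_neg (by omega)]

lemma atom_un_eq {q : ℕ} (hq : q ≤ n) (α : Bool) : atom (un n) α q = ind (ES n q α) := by
  classical
  suffices H : ∀ d q' (α' : Bool), q' + d = n → atom (un n) α' q' = ind (ES n q' α') by
    exact H (n - q) q α (by omega)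
  intro d
  induction d with
  | zero =>
    intro q' α' h
    rw [Nat.add_zero] at h
    subst h
    have h1 := atom_top (un q') α'
    rw [dim_un] at h1
    rw [h1, ES_top, ind, Finset.sum_singleton]
  | succ d ih =>
    intro q' α' h
    have hlt : q' < n := by omega
    rw [atom_succ (by rw [dim_un]; exact hlt) α', ih (q' + 1) α' (by omega)]
    cases α'
    · unfold bdp
      rw [if_neg (by simp), bd_ES, negPart_ind_sub (ES_disj hlt)]
    · unfold bdp
      rw [if_pos rfl, bd_ES, posPart_ind_sub (ES_disj hlt)]

lemma bdCell_dim0 {τ : Cell n} (h : Cell.dim τ = 0) : bdCell τ = 0 := by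
  classical
  have h0 : Finset.univ.filter (fun i => τ i = none) = ∅ :=
    Finset.card_eq_zero.1 (by unfold Cell.dim at h; exact h)
  unfold bdCell
  rw [h0, Finset.sum_empty]

lemma bd_ind_ES_zero (α : Bool) : bd (ind (ES n 0 α)) = 0 := by
  rw [bd_eq, lin_ind]
  apply Finset.sum_eq_zero
  intro τ hτ
  exact bdCell_dim0 (mem_ES.1 hτ).1

/-- The boundary of the indicator of `ES` does not depend on the sign. -/
lemma bd_ind_ES_congr (q : ℕ) (α β : Bool) :
    bd (ind (ES n q α)) = bd (ind (ES n q β)) := by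
  cases q with
  | zero => rw [bd_ind_ES_zero, bd_ind_ES_zero]
  | succ q => rw [bd_ES, bd_ES]

/-! ### Linearity conveniences -/

lemma update_self {τ : Cell n} {k : Fin n} {v : Option Bool} (h : τ k = v) :
    Function.update τ k v = τ := by
  funext j
  by_cases hj : j = k
  · subst hj
    rw [Function.update_self, ← h]
  · rw [Function.update_of_ne hj]

lemma bd_single (τ : Cell n) (z : ℤ) : bd (Finsupp.single τ z) = z • bdCell τ := by
  rw [bd_eq, lin_single]

lemma bd_add (c d : Chain n) : bd (c + d) = bd c + bd d := by
  rw [bd_eq, bd_eq, bd_eq, map_add]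

lemma bd_sub (c d : Chain n) : bd (c - d) = bd c - bd d := by
  rw [bd_eq, bd_eq, bd_eq, map_sub]

lemma bd_smul (z : ℤ) (c : Chain n) : bd (z • c) = z • bd c := by
  rw [bd_eq, bd_eq, map_smul]

lemma bd_zero : bd (0 : Chain n) = 0 := by
  rw [bd_eq, map_zero]

lemma Dfun_single (k : Fin n) (γ : Bool) (τ : Cell n) (z : ℤ) :
    Dfun k γ (Finsupp.single τ z) = z • Dcell k γ τ := by
  rw [Dfun_eq, lin_single]

lemma Dfun_add (k : Fin n) (γ : Bool) (c d : Chain n) :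
    Dfun k γ (c + d) = Dfun k γ c + Dfun k γ d := by
  rw [Dfun_eq, Dfun_eq, Dfun_eq, map_add]

lemma Dfun_sub (k : Fin n) (γ : Bool) (c d : Chain n) :
    Dfun k γ (c - d) = Dfun k γ c - Dfun k γ d := by
  rw [Dfun_eq, Dfun_eq, Dfun_eq, map_sub]

lemma Dfun_smul (k : Fin n) (γ : Bool) (z : ℤ) (c : Chain n) :
    Dfun k γ (z • c) = z • Dfun k γ c := by
  rw [Dfun_eq, Dfun_eq, map_smul]

lemma Dfun_zero (k : Fin n) (γ : Bool) : Dfun k γ (0 : Chain n) = 0 := by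
  rw [Dfun_eq, map_zero]

lemma phi_single (k : Fin n) (γ : Bool) (τ : Cell n) (z : ℤ) :
    phi k γ (Finsupp.single τ z) = z • phiCell k γ τ := by
  rw [phi, lin_single]

lemma phi_sub (k : Fin n) (γ : Bool) (c d : Chain n) :
    phi k γ (c - d) = phi k γ c - phi k γ d := by
  rw [phi, phi, phi, map_sub]

/-! ### More `below` bookkeeping -/

lemma below_update_some_lt {τ : Cell n} {i k : Fin n} (h : i < k) (hi : τ i = none)
    {v : Option Bool} (hv : v ≠ none) :
    Cell.below (Function.update τ i v) k + 1 = Cell.below τ k := by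
  classical
  unfold Cell.below
  have hset : Finset.univ.filter (fun j => j < k ∧ τ j = none)
      = insert i (Finset.univ.filter fun j => j < k ∧ Function.update τ i v j = none) := by
    ext j
    by_cases he : j = i
    · subst he; simp [h, hi]
    · simp only [Finset.mem_insert, Finset.mem_filter, Finset.mem_univ, true_and, he, false_or,
        Function.update_of_ne he]
  rw [hset, Finset.card_insert_of_notMem (by simp [hv])]

lemma below_update_none_gt {τ : Cell n} {k i : Fin n} (h : k < i) (hk : τ k ≠ none) :
    Cell.below (Function.update τ k none) i = Cell.below τ i + 1 := by
  classical
  unfold Cell.below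
  have hset : Finset.univ.filter (fun j => j < i ∧ Function.update τ k none j = none)
      = insert k (Finset.univ.filter fun j => j < i ∧ τ j = none) := by
    ext j
    by_cases he : j = k
    · subst he; simp [h, hk]
    · simp only [Finset.mem_insert, Finset.mem_filter, Finset.mem_univ, true_and, he, false_or,
        Function.update_of_ne he]
  rw [hset, Finset.card_insert_of_notMem (by simp [hk])]

/-! ### The chain homotopy identity -/

lemma Dcell_pos {k : Fin n} {γ : Bool} {τ : Cell n} (h : τ k = some (!γ)) :
    Dcell k γ τ = (-((-1 : ℤ) ^ Cell.below τ k * sgn γ)) •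
      Finsupp.single (Function.update τ k (none : Option Bool)) 1 := by
  rw [Dcell, if_pos h]

lemma Dcell_neg {k : Fin n} {γ : Bool} {τ : Cell n} (h : τ k ≠ some (!γ)) :
    Dcell k γ τ = 0 := by
  rw [Dcell, if_neg h]

lemma Dfun_bdCell (k : Fin n) (γ : Bool) (τ : Cell n) :
    Dfun k γ (bdCell τ) = ∑ i ∈ Finset.univ.filter (fun i => τ i = none),
      ((-1 : ℤ) ^ Cell.below τ i) •
        (Dcell k γ (Function.update τ i (some true)) -
         Dcell k γ (Function.update τ i (some false))) := by
  rw [Dfun_eq, bdCell, map_sum]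
  apply Finset.sum_congr rfl
  intro i _
  rw [map_smul, map_sub, lin_single, lin_single, one_smul, one_smul]

/-- Termwise cancellation in the homotopy identity, away from slot `k`. -/
lemma homotopy_cancel {k i : Fin n} {γ : Bool} {τ : Cell n} (hik : i ≠ k)
    (hi : τ i = none) (hk' : τ k = some (!γ)) :
    (-((-1 : ℤ) ^ Cell.below τ k * sgn γ)) •
      (((-1 : ℤ) ^ Cell.below (Function.update τ k none) i) •
        (Finsupp.single (Function.update (Function.update τ k none) i (some true)) (1 : ℤ) -
         Finsupp.single (Function.update (Function.update τ k none) i (some false)) 1))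
    + ((-1 : ℤ) ^ Cell.below τ i) •
        (Dcell k γ (Function.update τ i (some true)) -
         Dcell k γ (Function.update τ i (some false))) = 0 := by
  classical
  have hki : k ≠ i := Ne.symm hik
  have hkslot : ∀ δ : Bool, (Function.update τ i (some δ)) k = some (!γ) := by
    intro δ
    rw [Function.update_of_ne hki]
    exact hk'
  have hcomm : ∀ δ : Bool,
      Function.update (Function.update τ i (some δ)) k none
        = Function.update (Function.update τ k none) i (some δ) := by
    intro δ
    exact Function.update_comm hik (some δ) none τ
  rw [Dcell_pos (hkslot true), Dcell_pos (hkslot false), hcomm true, hcomm false]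
  rcases lt_or_gt_of_ne hik with hlt | hgt
  · -- i < k
    have hb1 := below_update_some_lt hlt hi (v := some true) (by simp)
    have hb0 := below_update_some_lt hlt hi (v := some false) (by simp)
    have hbh : Cell.below (Function.update τ k none) i = Cell.below τ i :=
      below_update _ k (not_lt.2 (le_of_lt hlt))
    set b1 := Cell.below (Function.update τ i (some true)) k with hb1d
    have hb0e : Cell.below (Function.update τ i (some false)) k = b1 := by omega
    have hbk : Cell.below τ k = b1 + 1 := by omega
    rw [hb0e, hbk, hbh]
    module
  · -- k < i
    have hbh : Cell.below (Function.update τ k none) i = Cell.below τ i + 1 :=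
      below_update_none_gt hgt (by rw [hk']; simp)
    have hb1 : Cell.below (Function.update τ i (some true)) k = Cell.below τ k :=
      below_update _ i (not_lt.2 (le_of_lt hgt))
    have hb0 : Cell.below (Function.update τ i (some false)) k = Cell.below τ k :=
      below_update _ i (not_lt.2 (le_of_lt hgt))
    rw [hb1, hb0, hbh]
    module

lemma homotopy_cell (k : Fin n) (γ : Bool) (τ : Cell n) :
    bd (Dcell k γ τ) + Dfun k γ (bdCell τ) = Finsupp.single τ 1 - phiCell k γ τ := by
  classical
  rcases hk : τ k with _ | δ₀
  · -- slot `k` is blank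
    have hDc : Dcell k γ τ = 0 := Dcell_neg (by rw [hk]; simp)
    have hphi : phiCell k γ τ = 0 := by rw [phiCell, if_pos hk]
    rw [hDc, bd_zero, zero_add, hphi, sub_zero, Dfun_bdCell]
    rw [Finset.sum_eq_single k]
    · have hupd : ∀ δ : Bool, Function.update (Function.update τ k (some δ)) k none = τ := by
        intro δ
        rw [Function.update_idem]
        exact update_self hk
      have hbelow : ∀ δ : Bool,
          Cell.below (Function.update τ k (some δ)) k = Cell.below τ k := fun δ =>
        below_update _ k (lt_irrefl k)
      cases γ
      · -- γ = false; !γ = true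
        rw [Dcell_pos (by rw [Function.update_self]; rfl),
          Dcell_neg (by rw [Function.update_self]; simp), hupd true, hbelow true, sub_zero,
          smul_smul, sgn_false]
        rw [show ((-1 : ℤ) ^ Cell.below τ k * -((-1 : ℤ) ^ Cell.below τ k * -1)) = 1 by
          rw [show ((-1 : ℤ) ^ Cell.below τ k * -((-1 : ℤ) ^ Cell.below τ k * -1))
            = (-1 : ℤ) ^ Cell.below τ k * (-1 : ℤ) ^ Cell.below τ k by ring, ← mul_pow]
          norm_num, one_smul]
      · -- γ = true; !γ = false
        rw [Dcell_neg (by rw [Function.update_self]; simp),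
          Dcell_pos (by rw [Function.update_self]; rfl), hupd false, hbelow false, zero_sub,
          smul_neg, smul_smul, sgn_true, mul_one]
        rw [show ((-1 : ℤ) ^ Cell.below τ k * -(-1 : ℤ) ^ Cell.below τ k) = -1 by
          rw [show ((-1 : ℤ) ^ Cell.below τ k * -(-1 : ℤ) ^ Cell.below τ k)
            = -((-1 : ℤ) ^ Cell.below τ k * (-1 : ℤ) ^ Cell.below τ k) by ring, ← mul_pow]
          norm_num]
        rw [neg_smul, neg_neg, one_smul]
    · intro i hi hik
      have hτi : τ i = none := (Finset.mem_filter.1 hi).2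
      have h1 : ∀ δ : Bool, Dcell k γ (Function.update τ i (some δ)) = 0 := by
        intro δ
        apply Dcell_neg
        rw [Function.update_of_ne (Ne.symm hik), hk]
        simp
      rw [h1 true, h1 false, sub_zero, smul_zero]
    · intro hq
      exact absurd (Finset.mem_filter.2 ⟨Finset.mem_univ k, hk⟩) hq
  · by_cases hδ : δ₀ = γ
    · -- slot `k` carries `∂^γ`
      have hk2 : τ k = some γ := by rw [hk, hδ]
      have hDc : Dcell k γ τ = 0 := Dcell_neg (by rw [hk2]; simp)
      have hphi : phiCell k γ τ = Finsupp.single τ 1 := by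
        rw [phiCell, if_neg (by rw [hk2]; simp), update_self hk2]
      rw [hDc, bd_zero, zero_add, hphi, sub_self, Dfun_bdCell]
      apply Finset.sum_eq_zero
      intro i hi
      have hτi : τ i = none := (Finset.mem_filter.1 hi).2
      have hik : i ≠ k := by rintro rfl; rw [hτi] at hk; cases hk
      have h1 : ∀ δ : Bool, Dcell k γ (Function.update τ i (some δ)) = 0 := by
        intro δ
        apply Dcell_neg
        rw [Function.update_of_ne (Ne.symm hik), hk2]
        simp
      rw [h1 true, h1 false, sub_zero, smul_zero]
    · -- slot `k` carries `∂^{-γ}`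
      have hk' : τ k = some (!γ) := by
        rw [hk]
        cases δ₀ <;> cases γ <;> simp_all
      have hknone : τ k ≠ none := by rw [hk]; simp
      have hphi : phiCell k γ τ = Finsupp.single (Function.update τ k (some γ)) 1 := by
        rw [phiCell, if_neg hknone]
      have hnones : Finset.univ.filter (fun i => Function.update τ k none i = none)
          = insert k (Finset.univ.filter fun i => τ i = none) := by
        ext i
        by_cases he : i = k
        · subst he; simp
        · simp only [Finset.mem_insert, Finset.mem_filter, Finset.mem_univ, true_and, he,
            false_or, Function.update_of_ne he]
      have hbd : bd (Dcell k γ τ) = (-((-1 : ℤ) ^ Cell.below τ k * sgn γ)) •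
          (((-1 : ℤ) ^ Cell.below τ k) •
            (Finsupp.single (Function.update τ k (some true)) (1 : ℤ) -
             Finsupp.single (Function.update τ k (some false)) 1)
          + ∑ i ∈ Finset.univ.filter (fun i => τ i = none),
              ((-1 : ℤ) ^ Cell.below (Function.update τ k none) i) •
                (Finsupp.single (Function.update (Function.update τ k none) i (some true)) 1 -
                 Finsupp.single (Function.update (Function.update τ k none) i (some false)) 1)) := by
        rw [Dcell_pos hk', bd_smul, bd_single, one_smul, bdCell, hnones,
          Finset.sum_insert (by simp [hknone])]
        congr 2
        · rw [below_update _ k (lt_irrefl k), Function.update_idem, Function.update_idem]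
      rw [hbd, Dfun_bdCell, hphi, smul_add, add_assoc, Finset.smul_sum,
        ← Finset.sum_add_distrib]
      have hzero : ∀ i ∈ Finset.univ.filter (fun i => τ i = none),
          ((-((-1 : ℤ) ^ Cell.below τ k * sgn γ)) •
            (((-1 : ℤ) ^ Cell.below (Function.update τ k none) i) •
              (Finsupp.single (Function.update (Function.update τ k none) i (some true)) (1 : ℤ) -
               Finsupp.single (Function.update (Function.update τ k none) i (some false)) 1))
          + ((-1 : ℤ) ^ Cell.below τ i) •
              (Dcell k γ (Function.update τ i (some true)) -
               Dcell k γ (Function.update τ i (some false)))) = 0 := by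
        intro i hi
        have hτi : τ i = none := (Finset.mem_filter.1 hi).2
        have hik : i ≠ k := by rintro rfl; rw [hτi] at hk; cases hk
        exact homotopy_cancel hik hτi hk'
      rw [Finset.sum_eq_zero hzero, add_zero]
      -- remaining: the `k`-term gives `single τ 1 - phiCell`
      cases γ
      · -- γ = false: τ = update τ k (some true)
        have hτeq : Function.update τ k (some true) = τ :=
          update_self (by rw [hk']; rfl)
        rw [hτeq, smul_smul, sgn_false]
        rw [show (-((-1 : ℤ) ^ Cell.below τ k * -1) * (-1 : ℤ) ^ Cell.below τ k) = 1 by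
          rw [show (-((-1 : ℤ) ^ Cell.below τ k * -1) * (-1 : ℤ) ^ Cell.below τ k)
            = (-1 : ℤ) ^ Cell.below τ k * (-1 : ℤ) ^ Cell.below τ k by ring, ← mul_pow]
          norm_num, one_smul]
      · -- γ = true: τ = update τ k (some false)
        have hτeq : Function.update τ k (some false) = τ :=
          update_self (by rw [hk']; rfl)
        rw [hτeq, smul_smul, sgn_true, mul_one]
        rw [show (-(-1 : ℤ) ^ Cell.below τ k * (-1 : ℤ) ^ Cell.below τ k) = -1 by
          rw [show (-(-1 : ℤ) ^ Cell.below τ k * (-1 : ℤ) ^ Cell.below τ k)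
            = -((-1 : ℤ) ^ Cell.below τ k * (-1 : ℤ) ^ Cell.below τ k) by ring, ← mul_pow]
          norm_num]
        rw [neg_smul, one_smul, neg_sub]

/-- The chain homotopy identity `∂D + D∂ = 1 - φ`. -/
lemma homotopy (k : Fin n) (γ : Bool) (c : Chain n) :
    bd (Dfun k γ c) + Dfun k γ (bd c) = c - phi k γ c := by
  induction c using Finsupp.induction_linear with
  | zero => rw [Dfun_zero, bd_zero, Dfun_zero, add_zero, phi, map_zero, sub_zero]
  | add f g hf hg =>
    rw [Dfun_add, bd_add, bd_add, Dfun_add, phi, map_add, ← phi, ← phi]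
    rw [show phi k γ f + phi k γ g = phi k γ f + phi k γ g from rfl]
    calc bd (Dfun k γ f) + bd (Dfun k γ g) + (Dfun k γ (bd f) + Dfun k γ (bd g))
        = (bd (Dfun k γ f) + Dfun k γ (bd f)) + (bd (Dfun k γ g) + Dfun k γ (bd g)) := by abel
      _ = (f - phi k γ f) + (g - phi k γ g) := by rw [hf, hg]
      _ = f + g - (phi k γ f + phi k γ g) := by abel
  | single τ z =>
    rw [Dfun_single, bd_smul, bd_single, Dfun_smul, phi_single, ← smul_add,
      homotopy_cell k γ τ, smul_sub, Finsupp.smul_single, smul_eq_mul, mul_one]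

/-! ### Properties of `phi` -/

lemma sgn_not (α : Bool) : sgn (!α) = -sgn α := by cases α <;> rfl

lemma sgn_injective {a b : Bool} (h : sgn a = sgn b) : a = b := by
  cases a <;> cases b <;> first | rfl | (exfalso; rw [sgn_true, sgn_false] at h; norm_num at h)

lemma sgn_twist (α : Bool) (m : ℕ) : sgn (twist α m) = (-1 : ℤ) ^ m * sgn α := by
  rcases Nat.even_or_odd m with he | ho
  · rw [twist, if_pos he, he.neg_one_pow, one_mul]
  · rw [twist, if_neg (Nat.not_even_iff_odd.2 ho), ho.neg_one_pow, sgn_not]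
    ring

lemma twist_twist (γ : Bool) (m : ℕ) : twist (twist γ m) m = γ := by
  unfold twist
  split_ifs <;> simp

lemma below_congr' {σ τ : Cell n} {i : Fin n} (h : ∀ j, j < i → (σ j = none ↔ τ j = none)) :
    Cell.below σ i = Cell.below τ i := by
  unfold Cell.below
  congr 1
  apply Finset.filter_congr
  intro j _
  constructor <;> rintro ⟨h1, h2⟩
  · exact ⟨h1, (h j h1).1 h2⟩
  · exact ⟨h1, (h j h1).2 h2⟩

lemma phi_bdCell_sum (k : Fin n) (γ : Bool) (τ : Cell n) :
    phi k γ (bdCell τ) = ∑ i ∈ Finset.univ.filter (fun i => τ i = none),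
      ((-1 : ℤ) ^ Cell.below τ i) •
        (phiCell k γ (Function.update τ i (some true)) -
         phiCell k γ (Function.update τ i (some false))) := by
  rw [phi, bdCell, map_sum]
  apply Finset.sum_congr rfl
  intro i _
  rw [map_smul, map_sub, lin_single, lin_single, one_smul, one_smul]

lemma phi_bdCell (k : Fin n) (γ : Bool) (τ : Cell n) :
    phi k γ (bdCell τ) = bd (phiCell k γ τ) := by
  classical
  rcases hk : τ k with _ | δ₀
  · rw [show phiCell k γ τ = 0 from by rw [phiCell, if_pos hk], bd_zero, phi_bdCell_sum]
    apply Finset.sum_eq_zero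
    intro i hi
    have hτi : τ i = none := (Finset.mem_filter.1 hi).2
    by_cases hik : i = k
    · have h1 : ∀ δ : Bool, phiCell k γ (Function.update τ i (some δ))
          = Finsupp.single (Function.update τ i (some γ)) 1 := by
        intro δ
        rw [hik, phiCell, if_neg (by rw [Function.update_self]; simp), Function.update_idem]
      rw [h1 true, h1 false, sub_self, smul_zero]
    · have h1 : ∀ δ : Bool, phiCell k γ (Function.update τ i (some δ)) = 0 := by
        intro δ
        rw [phiCell, if_pos (by rw [Function.update_of_ne (Ne.symm hik)]; exact hk)]
      rw [h1 true, h1 false, sub_self, smul_zero]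
  · have hknone : τ k ≠ none := by rw [hk]; simp
    have hphi : phiCell k γ τ = Finsupp.single (Function.update τ k (some γ)) 1 := by
      rw [phiCell, if_neg hknone]
    have hnones : (Finset.univ.filter fun i => Function.update τ k (some γ) i = none)
        = Finset.univ.filter (fun i => τ i = none) := by
      ext i
      by_cases he : i = k
      · subst he; simp [hk]
      · simp only [Finset.mem_filter, Finset.mem_univ, true_and, Function.update_of_ne he]
    have hrhs : bd (phiCell k γ τ) = ∑ i ∈ Finset.univ.filter (fun i => τ i = none),
        ((-1 : ℤ) ^ Cell.below (Function.update τ k (some γ)) i) •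
          (Finsupp.single (Function.update (Function.update τ k (some γ)) i (some true)) (1 : ℤ) -
           Finsupp.single (Function.update (Function.update τ k (some γ)) i (some false)) 1) := by
      rw [hphi, bd_single, one_smul, bdCell, hnones]
    rw [hrhs, phi_bdCell_sum]
    apply Finset.sum_congr rfl
    intro i hi
    have hτi : τ i = none := (Finset.mem_filter.1 hi).2
    have hik : i ≠ k := by rintro rfl; rw [hτi] at hk; cases hk
    have hbelow : Cell.below (Function.update τ k (some γ)) i = Cell.below τ i := by
      apply below_congr'
      intro j _
      by_cases hj : j = k
      · subst hj; rw [Function.update_self, hk]; simp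
      · rw [Function.update_of_ne hj]
    have hcell : ∀ δ : Bool, phiCell k γ (Function.update τ i (some δ))
        = Finsupp.single (Function.update (Function.update τ k (some γ)) i (some δ)) 1 := by
      intro δ
      rw [phiCell, if_neg (by rw [Function.update_of_ne (Ne.symm hik)]; exact hknone),
        Function.update_comm hik]
    rw [hcell true, hcell false, hbelow]

lemma phi_add (k : Fin n) (γ : Bool) (c d : Chain n) :
    phi k γ (c + d) = phi k γ c + phi k γ d := by
  rw [phi, phi, phi, map_add]

lemma phi_zero (k : Fin n) (γ : Bool) : phi k γ (0 : Chain n) = 0 := by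
  rw [phi, map_zero]

/-- `phi` is a chain map. -/
lemma phi_bd (k : Fin n) (γ : Bool) (c : Chain n) : phi k γ (bd c) = bd (phi k γ c) := by
  induction c using Finsupp.induction_linear with
  | zero => simp only [bd_zero, phi_zero]
  | add f g hf hg => rw [bd_add, phi_add, hf, hg, phi_add, bd_add]
  | single τ z =>
    rw [bd_single, phi, map_smul, ← phi, phi_bdCell, phi_single, bd_smul]

/-- `sLe` at `k` only depends on values away from `k` and non-blankness at `k`. -/
lemma sLe_eq_of_agree {τ τ' : Cell n} {k : Fin n} (hk : τ k ≠ none) (hk' : τ' k ≠ none)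
    (h : ∀ j, j ≠ k → τ j = τ' j) : Cell.sLe τ k = Cell.sLe τ' k := by
  apply sLe_congr
  intro i _
  by_cases hik : i = k
  · subst hik
    constructor <;> intro hc
    · exact absurd hc hk
    · exact absurd hc hk'
  · rw [h i hik]

/-- Members of `ES` with a `some` at slot `k` are determined by their other slots. -/
lemma ES_inj {q : ℕ} {α : Bool} {k : Fin n} {γ : Bool} :
    ∀ τ ∈ (ES n q α).filter (fun τ => τ k ≠ none),
    ∀ τ' ∈ (ES n q α).filter (fun τ => τ k ≠ none),
      Function.update τ k (some γ) = Function.update τ' k (some γ) → τ = τ' := by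
  intro τ hτ τ' hτ' heq
  obtain ⟨hτm, hτk⟩ := Finset.mem_filter.1 hτ
  obtain ⟨hτ'm, hτ'k⟩ := Finset.mem_filter.1 hτ'
  have hagree : ∀ j, j ≠ k → τ j = τ' j := by
    intro j hj
    have := congrFun heq j
    rwa [Function.update_of_ne hj, Function.update_of_ne hj] at this
  rcases hv : τ k with _ | δ
  · exact absurd hv hτk
  rcases hv' : τ' k with _ | δ'
  · exact absurd hv' hτ'k
  have hsLe : Cell.sLe τ k = Cell.sLe τ' k := sLe_eq_of_agree hτk hτ'k hagree
  have e1 := extremeSign_iff.1 (mem_ES.1 hτm).2 k hτk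
  have e2 := extremeSign_iff.1 (mem_ES.1 hτ'm).2 k hτ'k
  rw [← e2, eSgn, eSgn, hsLe, hv, hv'] at e1
  have hδ : δ = δ' := sgn_injective (by
    have hpow : ((-1 : ℤ) ^ ((k : ℕ) + 1 + Cell.sLe τ' k)) ≠ 0 := by
      apply pow_ne_zero; norm_num
    exact mul_left_cancel₀ hpow e1)
  funext j
  by_cases hj : j = k
  · subst hj; rw [hv, hv', hδ]
  · exact hagree j hj

lemma phi_ind_ES (k : Fin n) (γ : Bool) (q : ℕ) (α : Bool) :
    phi k γ (ind (ES n q α)) =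
      ind (((ES n q α).filter fun τ => τ k ≠ none).image
        fun τ => Function.update τ k (some γ)) := by
  classical
  rw [phi, lin_ind]
  rw [← Finset.sum_filter_of_ne (p := fun τ => τ k ≠ none)
    (fun τ _ hne => by
      intro hk
      apply hne
      rw [phiCell, if_pos hk])]
  rw [ind, Finset.sum_image ES_inj]
  apply Finset.sum_congr rfl
  intro τ hτ
  rw [phiCell, if_neg (Finset.mem_filter.1 hτ).2]

/-- The images of the positive and negative extreme sets under `phi` are disjoint in
dimensions at most `n - 2`. -/
lemma phi_image_disj {q : ℕ} (hq : q + 2 ≤ n) (k : Fin n) (γ : Bool) :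
    ∀ ρ ∈ ((ES n q true).filter fun τ => τ k ≠ none).image
        (fun τ => Function.update τ k (some γ)),
      ρ ∉ ((ES n q false).filter fun τ => τ k ≠ none).image
        (fun τ => Function.update τ k (some γ)) := by
  classical
  intro ρ h1 h2
  obtain ⟨τ, hτ, rfl⟩ := Finset.mem_image.1 h1
  obtain ⟨τ', hτ', heq⟩ := Finset.mem_image.1 h2
  obtain ⟨hτm, hτk⟩ := Finset.mem_filter.1 hτ
  obtain ⟨hτ'm, hτ'k⟩ := Finset.mem_filter.1 hτ'
  have hagree : ∀ j, j ≠ k → τ' j = τ j := by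
    intro j hj
    have := congrFun heq j
    rwa [Function.update_of_ne hj, Function.update_of_ne hj] at this
  -- find a second `some` slot
  have hcard : (Finset.univ.filter fun j => τ j ≠ none).card = n - q := by
    have := Finset.card_filter_add_card_filter_not (s := Finset.univ)
      (p := fun j => τ j = none)
    have hdim : Cell.dim τ = q := (mem_ES.1 hτm).1
    unfold Cell.dim at hdim
    simp only [Finset.card_univ, Fintype.card_fin] at this
    have h2 : (Finset.univ.filter fun j => τ j ≠ none).card
        = (Finset.univ.filter fun j => ¬ τ j = none).card := rfl
    omega
  obtain ⟨j, hjmem, hjk⟩ : ∃ j ∈ Finset.univ.filter (fun j => τ j ≠ none), j ≠ k := by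
    apply Finset.exists_mem_ne
    rw [hcard]
    omega
  have hjτ : τ j ≠ none := (Finset.mem_filter.1 hjmem).2
  have hjτ' : τ' j ≠ none := by rw [hagree j hjk]; exact hjτ
  have hsLe : Cell.sLe τ' j = Cell.sLe τ j := by
    apply sLe_congr
    intro i _
    by_cases hik : i = k
    · subst hik
      constructor <;> intro hc
      · exact absurd hc hτ'k
      · exact absurd hc hτk
    · rw [hagree i hik]
  have e1 := extremeSign_iff.1 (mem_ES.1 hτm).2 j hjτ
  have e2 := extremeSign_iff.1 (mem_ES.1 hτ'm).2 j hjτ'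
  rw [eSgn, hsLe, hagree j hjk, ← eSgn] at e2
  rw [e1] at e2
  rw [sgn_true, sgn_false] at e2
  norm_num at e2

/-! ### Top-dimensional computations -/

lemma dim_kcell (k : Fin n) (γ : Bool) : Cell.dim (kcell k γ) + 1 = n := by
  rw [kcell, dim_update_some (show (un n) k = none from rfl) γ, dim_un]

lemma sLe_one {τ : Cell n} {k : Fin n} (hk : τ k ≠ none) (ho : ∀ j, j ≠ k → τ j = none) :
    Cell.sLe τ k = 1 := by
  classical
  unfold Cell.sLe
  have hset : Finset.univ.filter (fun i => i ≤ k ∧ τ i ≠ none) = {k} := by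
    ext j
    simp only [Finset.mem_filter, Finset.mem_univ, true_and, Finset.mem_singleton]
    constructor
    · rintro ⟨h1, h2⟩
      by_contra hne
      exact h2 (ho j hne)
    · rintro rfl
      exact ⟨le_refl _, hk⟩
  rw [hset, Finset.card_singleton]

/-- The extreme cells of dimension `n-1` with a `some` at slot `k` are unique. -/
lemma ES_pred_char {α : Bool} {τ : Cell n} (k : Fin n) (hτ : τ ∈ ES n (n - 1) α)
    (hk : τ k ≠ none) : τ = Function.update (un n) k (some (twist α k)) := by
  have hd : Cell.dim τ = n - 1 := (mem_ES.1 hτ).1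
  have hn : 0 < n := k.pos
  have hothers : ∀ j, j ≠ k → τ j = none := eq_none_of_dim_pred (by omega) hk
  have hsle : Cell.sLe τ k = 1 := sLe_one hk hothers
  rcases hv : τ k with _ | δ
  · exact absurd hv hk
  have he := extremeSign_iff.1 (mem_ES.1 hτ).2 k hk
  rw [eSgn, hsle, hv] at he
  simp only [osgn] at he
  rw [show (k : ℕ) + 1 + 1 = (k : ℕ) + 2 * 1 by ring, neg_one_pow_add_two_mul] at he
  have hδ : δ = twist α k := by
    apply sgn_injective
    rw [sgn_twist, ← he, ← mul_assoc, ← mul_pow]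
    norm_num
  funext j
  by_cases hj : j = k
  · subst hj
    rw [Function.update_self, hv, hδ]
  · rw [Function.update_of_ne hj, hothers j hj]
    rfl

lemma mem_ES_pred (k : Fin n) (α : Bool) :
    Function.update (un n) k (some (twist α k)) ∈ ES n (n - 1) α := by
  have hn : 0 < n := k.pos
  refine mem_ES.2 ⟨?_, ?_⟩
  · have := dim_update_some (show (un n) k = none from rfl) (twist α k)
    rw [dim_un] at this
    omega
  · rw [extremeSign_iff]
    intro i hi
    by_cases hik : i = k
    · subst hik
      have hsle : Cell.sLe (Function.update (un n) i (some (twist α i))) i = 1 :=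
        sLe_one (by rw [Function.update_self]; simp)
          (fun j hj => by rw [Function.update_of_ne hj]; rfl)
      rw [eSgn, hsle, Function.update_self]
      simp only [osgn]
      rw [sgn_twist, show (i : ℕ) + 1 + 1 = (i : ℕ) + 2 * 1 by ring, neg_one_pow_add_two_mul,
        ← mul_assoc, ← mul_pow]
      norm_num
    · exfalso
      apply hi
      rw [Function.update_of_ne hik]
      rfl

lemma phi_M_top (k : Fin n) (γ α : Bool) :
    phi k γ (ind (ES n (n - 1) α)) = Finsupp.single (kcell k γ) 1 := by
  classical
  rw [phi, lin_ind]
  rw [Finset.sum_eq_single (Function.update (un n) k (some (twist α k)))]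
  · rw [phiCell, if_neg (by rw [Function.update_self]; simp), Function.update_idem]
    rfl
  · intro τ hτ hne
    by_cases hk2 : τ k = none
    · rw [phiCell, if_pos hk2]
    · exact absurd (ES_pred_char k hτ hk2) hne
  · intro hc
    exact absurd (mem_ES_pred k α) hc

lemma Dfun_ES_pred_zero (k : Fin n) (γ : Bool) :
    Dfun k γ (ind (ES n (n - 1) (twist γ k))) = 0 := by
  rw [Dfun_eq, lin_ind]
  apply Finset.sum_eq_zero
  intro τ hτ
  apply Dcell_neg
  intro hc
  have hk2 : τ k ≠ none := by rw [hc]; simp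
  have hchar := ES_pred_char k hτ hk2
  rw [hchar, Function.update_self, twist_twist] at hc
  cases γ <;> simp at hc

lemma phi_ES_eq_atom (k : Fin n) (γ : Bool) :
    ∀ d q, q + 1 + d = n → ∀ α, phi k γ (ind (ES n q α)) = atom (kcell k γ) α q := by
  intro d
  induction d with
  | zero =>
    intro q h α
    have hq : q = n - 1 := by omega
    subst hq
    rw [phi_M_top k γ α]
    have hd := dim_kcell k γ
    have h1 := atom_top (kcell k γ) α
    rw [show Cell.dim (kcell k γ) = n - 1 from by omega] at h1
    exact h1.symm
  | succ d ih =>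
    intro q h α
    have hdim : Cell.dim (kcell k γ) = n - 1 := by have := dim_kcell k γ; omega
    have hlt : q < Cell.dim (kcell k γ) := by omega
    rw [atom_succ hlt α, ← ih (q + 1) (by omega) α]
    have hb : bd (phi k γ (ind (ES n (q + 1) α)))
        = ind (((ES n q true).filter fun τ => τ k ≠ none).image
            (fun τ => Function.update τ k (some γ)))
          - ind (((ES n q false).filter fun τ => τ k ≠ none).image
            (fun τ => Function.update τ k (some γ))) := by
      rw [← phi_bd, bd_ES, phi_sub, phi_ind_ES, phi_ind_ES]
    cases α
    · unfold bdp
      rw [if_neg (by simp), hb, negPart_ind_sub (phi_image_disj (by omega) k γ), ← phi_ind_ES]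
    · unfold bdp
      rw [if_pos rfl, hb, posPart_ind_sub (phi_image_disj (by omega) k γ), ← phi_ind_ES]

lemma phi_atom_un (k : Fin n) (γ : Bool) {q : ℕ} (hq : q + 1 ≤ n) (α : Bool) :
    phi k γ (atom (un n) α q) = atom (kcell k γ) α q := by
  rw [atom_un_eq (by omega), phi_ES_eq_atom k γ (n - (q + 1)) q (by omega) α]

lemma atom_un_sub {q : ℕ} (hq : q + 1 ≤ n) :
    atom (un n) true q - atom (un n) false q = bd (atom (un n) true (q + 1)) := by
  rw [atom_un_eq (by omega) true, atom_un_eq (by omega) false, atom_un_eq hq true, bd_ES]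

lemma bd_atom_un_sub_zero {q : ℕ} (hq : q ≤ n) :
    bd (atom (un n) true q - atom (un n) false q) = 0 := by
  rw [bd_sub, atom_un_eq hq, atom_un_eq hq, bd_ind_ES_congr q true false, sub_self]

lemma key_identity (k : Fin n) (γ : Bool) {q : ℕ} (hq : q + 1 ≤ n) :
    bd (Dfun k γ (atom (un n) true q - atom (un n) false q))
      = (atom (un n) true q - atom (un n) false q)
        - (atom (kcell k γ) true q - atom (kcell k γ) false q) := by
  have hc := homotopy k γ (atom (un n) true q - atom (un n) false q)
  rw [bd_atom_un_sub_zero (by omega), Dfun_zero, add_zero] at hc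
  rw [hc, phi_sub, phi_atom_un k γ hq true, phi_atom_un k γ hq false]

/-! ### Evaluation of `Aseq` -/

lemma Aseq_val_lt (k : Fin n) (γ : Bool) {Q i : ℕ} (h : i + 1 < Q) (β α : Bool) :
    Aseq k γ Q β i α = atom (un n) α i := by
  simp only [Aseq]
  rw [if_pos h]

lemma Aseq_val_eq_same (k : Fin n) (γ : Bool) {Q i : ℕ} (h : i + 1 = Q) (β : Bool) :
    Aseq k γ Q β i β = atom (un n) β i := by
  simp only [Aseq]
  rw [if_neg (by omega), if_pos h]
  simp

lemma Aseq_val_eq_diff (k : Fin n) (γ : Bool) {Q i : ℕ} (h : i + 1 = Q) {α β : Bool}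
    (hne : α ≠ β) :
    Aseq k γ Q β i α = atom (un n) β i - bd (Dfun k γ (atom (un n) β i)) := by
  simp only [Aseq]
  rw [if_neg (by omega), if_pos h, if_neg hne]

lemma Aseq_val_top (k : Fin n) (γ : Bool) {Q i : ℕ} (h : i = Q) (β α : Bool) :
    Aseq k γ Q β i α = sgn β • Dfun k γ (atom (un n) β (Q - 1)) := by
  simp only [Aseq]
  rw [if_neg (by omega), if_neg (by omega), if_pos h]

lemma Aseq_val_zero (k : Fin n) (γ : Bool) {Q i : ℕ} (h : Q < i) (β α : Bool) :
    Aseq k γ Q β i α = 0 := by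
  simp only [Aseq]
  rw [if_neg (by omega), if_neg (by omega), if_neg (by omega)]

/-! ### The main induction -/

lemma Aq_eq (k : Fin n) (γ : Bool) : ∀ q, q + 1 ≤ n → ∀ (i : ℕ) (α : Bool),
    Aq k γ q i α = if i < q then atom (un n) α i
      else if i = q then atom (kcell k γ) α q + Dfun k γ (bd (atom (un n) true q))
      else atom (kcell k γ) α i := by
  intro q
  induction q with
  | zero =>
    intro hq i α
    have hE : bd (atom (un n) true 0) = 0 := by
      rw [atom_un_eq (by omega) true, bd_ind_ES_zero]
    simp only [Aq, atomSeq]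
    rcases i with _ | j
    · rw [if_neg (by omega), if_pos rfl, hE, Dfun_zero, add_zero]
    · rw [if_neg (by omega), if_neg (by omega)]
  | succ q ih =>
    intro hq i α
    have hq' : q + 1 ≤ n := by omega
    have hM : ∀ β, Aq k γ q q β
        = atom (kcell k γ) β q + Dfun k γ (bd (atom (un n) true q)) := by
      intro β
      rw [ih hq' q β, if_neg (by omega), if_pos rfl]
    simp only [Aq, comp, dOp]
    rcases Nat.lt_trichotomy i q with hlt | heq | hgt
    · rw [if_pos hlt, if_pos hlt, Aseq_val_lt k γ (by omega) true α, if_pos (by omega)]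
      abel
    · subst heq
      rw [if_neg (lt_irrefl i), if_pos rfl, if_neg (lt_irrefl i), if_pos rfl,
        if_pos (by omega : i < i + 1)]
      cases α
      · rw [Aseq_val_eq_same k γ rfl false, Aseq_val_eq_diff k γ rfl (by simp : true ≠ false),
          Aseq_val_eq_diff k γ rfl (by simp : false ≠ true), hM false, hM true]
        have hk2 := key_identity k γ hq'
        rw [Dfun_sub, bd_sub] at hk2
        rw [sub_eq_iff_eq_add.mp hk2]
        abel_nf
        simp only [ite_self]
        abel
      · rw [Aseq_val_eq_same k γ rfl true]
        abel_nf
        simp only [ite_self]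
        abel
    · rw [if_neg (by omega : ¬ i < q), if_neg (by omega : ¬ i < q),
        if_neg (by omega : ¬ i = q), if_neg (by omega : ¬ i = q)]
      by_cases hie : i = q + 1
      · subst hie
        rw [Aseq_val_top k γ rfl false α, Aseq_val_top k γ rfl true α]
        simp only [Nat.add_sub_cancel]
        rw [sgn_false, sgn_true, neg_one_smul, one_smul]
        rw [ih hq' (q + 1) α, if_neg (by omega), if_neg (by omega)]
        simp only [if_true]
        rw [← atom_un_sub hq', Dfun_sub]
        abel_nf
        rw [if_neg (by omega : ¬ q + 1 < q + 1)]
      · rw [Aseq_val_zero k γ (by omega) false α, Aseq_val_zero k γ (by omega) true α,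
          ih hq' i α, if_neg (by omega), if_neg (by omega),
          if_neg (by omega : ¬ i < q + 1), if_neg (by omega : ¬ i = q + 1)]
        abel

/-- for `1 ≤ k ≤ n` (here `k : Fin n`, 0-indexed) and a sign `γ`, with
`σ = u_{k−1} ⊗ ∂^γ u₁ ⊗ u_{n−k}` and the inductively defined composites `A_q`,
one has `A_{n−1} = d_{n−1}^{(−1)^{k−1}γ} ⟨u_n⟩`. -/
theorem Aq_top_eq_dOp_atom (n : ℕ) (k : Fin n) (γ : Bool) :
    Aq k γ (n - 1) = dOp (n - 1) (twist γ (k : ℕ)) (atomSeq (un n)) := by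
  have hn : 0 < n := k.pos
  funext i α
  rw [Aq_eq k γ (n - 1) (by omega) i α]
  simp only [dOp, atomSeq]
  rcases Nat.lt_trichotomy i (n - 1) with hlt | heq | hgt
  · rw [if_pos hlt, if_pos hlt]
  · subst heq
    rw [if_neg (lt_irrefl _), if_pos rfl, if_neg (lt_irrefl _), if_pos rfl]
    have h1 : atom (kcell k γ) α (n - 1) = Finsupp.single (kcell k γ) 1 := by
      have h2 := atom_top (kcell k γ) α
      rw [show Cell.dim (kcell k γ) = n - 1 from by have := dim_kcell k γ; omega] at h2
      exact h2
    have h2 : bd (atom (un n) true (n - 1)) = bd (ind (ES n (n - 1) (twist γ (k : ℕ)))) := by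
      rw [atom_un_eq (by omega) true, bd_ind_ES_congr]
    have h3 := homotopy k γ (ind (ES n (n - 1) (twist γ (k : ℕ))))
    rw [Dfun_ES_pred_zero k γ, bd_zero, zero_add, phi_M_top k γ] at h3
    rw [h1, h2, h3, atom_un_eq (by omega) (twist γ (k : ℕ))]
    abel
  · rw [if_neg (by omega), if_neg (by omega), if_neg (by omega), if_neg (by omega)]
    exact atom_of_gt (by have := dim_kcell k γ; omega) α

end CubicalNerve
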